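/- Let K be a symmetric real 3x3 matrix, w0 in R^3 a unit vector, and theta, thetabar real numbers. Then trace( K * exp((theta - thetabar) * hat(w0)) ) = w0^T K w0 + ( trace(K) - w0^T K w0 ) * cos(theta - thetabar). Consequently, for a matrix Fisher distribution M(F) with proper right polar decomposition F = M K whose mean attitude M lies in S_{M0}(w0), the density of R(theta) = M0 * exp(theta * hat(w0)) is proportional to exp[ (trace(K) - w0^T K w0) * cos(theta - thetabar) ], where thetabar = w0 . log(M0 M^T)^vee. (Theorem 1.) -/

import Mathlib

open Matrix

noncomputable section

/-- `SO3 R` means `R` is a rotation matrix: `Rᵀ R = I₃` and `det R = 1`. -/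
def SO3 (R : Matrix (Fin 3) (Fin 3) ℝ) : Prop :=
  Rᵀ * R = 1 ∧ R.det = 1

/-- The hat map sending `w ∈ ℝ³` to the skew-symmetric matrix
`[[0,-w3,w2],[w3,0,-w1],[-w2,w1,0]]`. -/
def hat (w : Fin 3 → ℝ) : Matrix (Fin 3) (Fin 3) ℝ :=
  !![0, -w 2, w 1; w 2, 0, -w 0; -w 1, w 0, 0]

set_option maxHeartbeats 1000000 in
lemma exp_smul_cube (A : Matrix (Fin 3) (Fin 3) ℝ) (hA3 : A * A * A = -A) (φ : ℝ) :
    NormedSpace.exp (φ • A) =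
      1 + Real.sin φ • A + (1 - Real.cos φ) • (A * A) := by
  have hodd : ∀ k : ℕ, A ^ (2 * k + 1) = ((-1 : ℝ) ^ k) • A := by
    intro k
    induction k with
    | zero => simp
    | succ n ih =>
      have h2 : 2 * (n + 1) + 1 = (2 * n + 1) + 2 := by ring
      rw [h2, pow_add, ih, pow_two, smul_mul_assoc, ← mul_assoc, hA3, smul_neg, pow_succ]
      module
  have heven : ∀ k : ℕ, A ^ (2 * (k + 1)) = ((-1 : ℝ) ^ k) • (A * A) := by
    intro k
    have h2 : 2 * (k + 1) = (2 * k + 1) + 1 := by ring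
    rw [h2, pow_succ, hodd, smul_mul_assoc]
  let g : ℕ → Matrix (Fin 3) (Fin 3) ℝ := fun n => ((Nat.factorial n : ℝ)⁻¹) • (φ • A) ^ n
  rw [NormedSpace.exp_eq_tsum (𝕂 := ℝ)]
  refine HasSum.tsum_eq (f := g) ?_
  have he : HasSum (fun k : ℕ => g (2 * k))
      ((1 + A * A) - Real.cos φ • (A * A)) := by
    have h1 : HasSum (fun k : ℕ => if k = 0 then (1 + A * A : Matrix (Fin 3) (Fin 3) ℝ) else 0)
        (1 + A * A) := hasSum_ite_eq 0 _
    have h2 := (Real.hasSum_cos φ).smul_const (A * A)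
    have := h1.sub h2
    convert this using 1
    case e'_3 => rfl
    funext k
    show ((Nat.factorial (2 * k) : ℝ)⁻¹) • (φ • A) ^ (2 * k) = _
    match k with
    | 0 => simp
    | j + 1 =>
      rw [smul_pow, heven, smul_smul, smul_smul, if_neg (Nat.succ_ne_zero j), zero_sub,
        ← neg_smul]
      congr 1
      rw [pow_succ]
      have : ((2 * (j + 1)).factorial : ℝ) ≠ 0 := Nat.cast_ne_zero.mpr (Nat.factorial_ne_zero _)
      field_simp
  have ho : HasSum (fun k : ℕ => g (2 * k + 1))
      (Real.sin φ • A) := by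
    have h2 := (Real.hasSum_sin φ).smul_const A
    convert h2 using 1
    funext k
    show ((Nat.factorial (2 * k + 1) : ℝ)⁻¹) • (φ • A) ^ (2 * k + 1) = _
    rw [smul_pow, hodd, smul_smul, smul_smul]
    congr 1
    have : ((2 * k + 1).factorial : ℝ) ≠ 0 := Nat.cast_ne_zero.mpr (Nat.factorial_ne_zero _)
    field_simp
  have htot := HasSum.even_add_odd he ho
  have heq : (1 + A * A - Real.cos φ • (A * A)) + Real.sin φ • A =
      1 + Real.sin φ • A + (1 - Real.cos φ) • (A * A) := by module
  rw [heq] at htot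
  exact htot


set_option maxHeartbeats 1000000 in
/-- Theorem 1: for symmetric `K` and a unit axis `w0`,
`tr(K exp((θ-θ̄) hat w0)) = w0ᵀKw0 + (tr K - w0ᵀKw0) cos(θ-θ̄)`; consequently, for the matrix
Fisher distribution with parameter `F = M K` whose mean attitude `M = M0 exp(θ̄ hat w0)` lies in
the single-axis subset `S_{M0}(w0)`, the (unnormalized) density
`etr(Fᵀ R(θ))` of `R(θ) = M0 exp(θ hat w0)` is proportional to
`exp[(tr K - w0ᵀKw0) cos(θ-θ̄)]`, with proportionality constant `exp(w0ᵀKw0)`. -/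
theorem stmt1 (K : Matrix (Fin 3) (Fin 3) ℝ) (hK : Kᵀ = K)
    (w0 : Fin 3 → ℝ) (hw0 : w0 ⬝ᵥ w0 = 1)
    (M0 : Matrix (Fin 3) (Fin 3) ℝ) (hM0 : SO3 M0)
    (thetabar : ℝ) (M : Matrix (Fin 3) (Fin 3) ℝ)
    (hM : M = M0 * NormedSpace.exp (thetabar • hat w0)) (theta : ℝ) :
    Matrix.trace (K * NormedSpace.exp ((theta - thetabar) • hat w0)) =
      w0 ⬝ᵥ K.mulVec w0 +
        (Matrix.trace K - w0 ⬝ᵥ K.mulVec w0) * Real.cos (theta - thetabar) ∧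
    Real.exp (Matrix.trace ((M * K)ᵀ * (M0 * NormedSpace.exp (theta • hat w0)))) =
      Real.exp (w0 ⬝ᵥ K.mulVec w0) *
        Real.exp ((Matrix.trace K - w0 ⬝ᵥ K.mulVec w0) * Real.cos (theta - thetabar)) := by
  have hw0' : w0 0 ^ 2 + w0 1 ^ 2 + w0 2 ^ 2 = 1 := by
    have := hw0
    simp [dotProduct, Fin.sum_univ_succ] at this
    linear_combination this
  have hKs : ∀ i j, K i j = K j i := by
    intro i j
    conv_lhs => rw [← hK]
    rfl
  set A := hat w0 with hA
  have hA3 : A * A * A = -A := by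
    ext i j
    fin_cases i <;> fin_cases j <;>
      · simp [hA, hat, Matrix.mul_apply, Fin.sum_univ_succ]
        first
          | ring1!
          | linear_combination (norm := ring1!) (w0 0) * hw0'
          | linear_combination (norm := ring1!) (-(w0 0)) * hw0'
          | linear_combination (norm := ring1!) (w0 1) * hw0'
          | linear_combination (norm := ring1!) (-(w0 1)) * hw0'
          | linear_combination (norm := ring1!) (w0 2) * hw0'
          | linear_combination (norm := ring1!) (-(w0 2)) * hw0'
  -- part 1
  have key : ∀ φ : ℝ, Matrix.trace (K * NormedSpace.exp (φ • A)) =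
      w0 ⬝ᵥ K.mulVec w0 + (Matrix.trace K - w0 ⬝ᵥ K.mulVec w0) * Real.cos φ := by
    intro φ
    rw [exp_smul_cube A hA3 φ]
    have hKA : Matrix.trace (K * A) = 0 := by
      simp [hA, hat, Matrix.trace, Matrix.mul_apply, Fin.sum_univ_succ, Matrix.diag,
        hKs 0 1, hKs 0 2, hKs 1 2]
      ring1!
    have hKAA : Matrix.trace (K * (A * A)) = w0 ⬝ᵥ K.mulVec w0 - Matrix.trace K := by
      simp [hA, hat, Matrix.trace, Matrix.mul_apply, Fin.sum_univ_succ, Matrix.diag,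
        dotProduct, Matrix.mulVec]
      first
        | linear_combination (norm := ring1!) (K 0 0 + K 1 1 + K 2 2) * hw0'
        | linear_combination (norm := ring1!) (-(K 0 0 + K 1 1 + K 2 2)) * hw0'
    rw [mul_add, mul_add, Matrix.trace_add, Matrix.trace_add, mul_one, Matrix.mul_smul,
      Matrix.trace_smul, Matrix.mul_smul, Matrix.trace_smul, hKA, hKAA]
    simp
    ring
  refine ⟨key _, ?_⟩
  -- part 2
  have hAT : Aᵀ = -A := by
    ext i j
    fin_cases i <;> fin_cases j <;> simp [hA, hat]
  have hMT : Mᵀ = NormedSpace.exp ((-thetabar) • A) * M0ᵀ := by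
    rw [hM, Matrix.transpose_mul, ← Matrix.exp_transpose, Matrix.transpose_smul, hAT,
      smul_neg, ← neg_smul]
  have hcomm : Commute ((-thetabar) • A) (theta • A) :=
    (Commute.refl A).smul_left _ |>.smul_right _
  have hprod : (M * K)ᵀ * (M0 * NormedSpace.exp (theta • A)) =
      K * NormedSpace.exp ((theta - thetabar) • A) := by
    rw [Matrix.transpose_mul, hK, hMT]
    have h1 : (theta - thetabar) • A = (-thetabar) • A + theta • A := by
      rw [← add_smul]; ring_nf
    rw [h1, Matrix.exp_add_of_commute _ _ hcomm]
    have hM0' : M0ᵀ * M0 = 1 := hM0.1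
    calc K * (NormedSpace.exp ((-thetabar) • A) * M0ᵀ) *
          (M0 * NormedSpace.exp (theta • A))
        = K * (NormedSpace.exp ((-thetabar) • A) * ((M0ᵀ * M0) *
            NormedSpace.exp (theta • A))) := by
          noncomm_ring
      _ = K * (NormedSpace.exp ((-thetabar) • A) * NormedSpace.exp (theta • A)) := by
          rw [hM0', one_mul]
      _ = _ := by rw [← Matrix.mul_assoc]
  rw [hprod, key, add_comm, Real.exp_add, mul_comm]
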